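/- arXiv:2103.02920 — 2 statements merged into one kernel-verified Lean document; each statement's English description precedes it below -/
import Mathlib

section
/- Assume there is no regulatory arbitrage at level γ (m ∈ ℝ^N, ∑mⁱ < γ ⟹ ∄ g ∈ G with Λ∘(m+g) ∈ A) and Assumption (A): for all n ∈ ℕ there exist z ≥ 0 and g ∈ G with Λ∘((γ/N + 1/n − n(Z−z)⁺)·𝟏 + g) ∈ A. Then ρ(0) = γ, where ρ(X) := inf{∑mⁱ | m ∈ ℝ^N, ∃g ∈ G, Λ∘(m+X+g) ∈ A}. -/
open scoped BigOperators

/-- The robust market-adjusted systemic risk measure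
`ρ(X) = inf { ∑ᵢ mⁱ | m ∈ ℝ^N, ∃ g ∈ G, Λ∘(m+X+g) ∈ A }`, `inf ∅ = +∞`. -/
noncomputable def rho {Ω : Type*} {N : ℕ} (A : Set (Ω → ℝ)) (G : Set (Ω → Fin N → ℝ))
    (Λ : (Fin N → ℝ) → ℝ) (X : Ω → Fin N → ℝ) : EReal :=
  sInf ((fun m : Fin N → ℝ => ((∑ i, m i : ℝ) : EReal)) ''
    {m | ∃ g ∈ G, (fun ω => Λ (fun i => m i + X ω i + g ω i)) ∈ A})

/-- absence of regulatory arbitrage at level γ together with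
Assumption (A) implies ρ(0) = γ. -/
theorem stmt_14 {Ω : Type*} [MetricSpace Ω] [Nonempty Ω] {N : ℕ} (hN : 0 < N)
    (Z : Ω → ℝ) (hZc : Continuous Z) (hZ1 : ∀ ω, 1 ≤ Z ω)
    (hZcomp : ∀ z : ℝ, IsCompact {ω | Z ω ≤ z})
    (A : Set (Ω → ℝ)) (G : Set (Ω → Fin N → ℝ))
    (hAmono : ∀ x y : Ω → ℝ, y ∈ A → (∀ ω, y ω ≤ x ω) → x ∈ A)
    (h0A : (0 : Ω → ℝ) ∈ A) (h0G : (0 : Ω → Fin N → ℝ) ∈ G)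
    (Λ : (Fin N → ℝ) → ℝ) (hΛmono : Monotone Λ)
    (hΛconc : ConcaveOn ℝ Set.univ Λ) (hΛ0 : Λ 0 = 0)
    (hCconv : Convex ℝ {X : Ω → Fin N → ℝ | ∃ g ∈ G, (fun ω => Λ (X ω + g ω)) ∈ A})
    (γ : ℝ) (hγ : γ ≤ 0)
    (hnoarb : ∀ m : Fin N → ℝ, (∑ i, m i) < γ →
      ¬ ∃ g ∈ G, (fun ω => Λ (fun i => m i + g ω i)) ∈ A)
    (hassA : ∀ n : ℕ, 0 < n → ∃ z : ℝ, 0 ≤ z ∧ ∃ g ∈ G,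
      (fun ω => Λ (fun i => γ / N + 1 / n - n * max (Z ω - z) 0 + g ω i)) ∈ A) :
    rho A G Λ 0 = (γ : EReal) := by
  have hNR : (0:ℝ) < N := by exact_mod_cast hN
  apply le_antisymm
  · -- rho ≤ γ
    rw [← EReal.le_of_forall_lt_iff_le]
    intro c hc
    have hcγ : (0:ℝ) < c - γ := by
      have : (γ:EReal) < (c:EReal) := hc
      have : γ < c := by exact_mod_cast this
      linarith
    obtain ⟨n, hn⟩ := exists_nat_gt ((N:ℝ) / (c - γ))
    have hn0 : 0 < n := by
      by_contra h
      push_neg at h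
      interval_cases n
      simp at hn
      nlinarith [div_pos hNR hcγ]
    have hnR : (0:ℝ) < n := by exact_mod_cast hn0
    have hkey : (N:ℝ) / n < c - γ := by
      rw [div_lt_iff₀ hnR]
      have := mul_lt_mul_of_pos_right hn hcγ
      field_simp at this
      nlinarith
    obtain ⟨z, hz, g, hg, hA⟩ := hassA n hn0
    set m : Fin N → ℝ := fun _ => γ / N + 1 / n with hm
    have hmem : m ∈ {m : Fin N → ℝ |
        ∃ g ∈ G, (fun ω => Λ (fun i => m i + (0 : Ω → Fin N → ℝ) ω i + g ω i)) ∈ A} := by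
      refine ⟨g, hg, hAmono _ _ hA fun ω => hΛmono fun i => ?_⟩
      have h1 : 0 ≤ max (Z ω - z) 0 := le_max_right _ _
      have h2 : 0 ≤ (n:ℝ) * max (Z ω - z) 0 := by positivity
      simp [hm]
      linarith
    have hsum : ∑ i, m i = γ + N / n := by
      simp [hm, Finset.sum_const]
      field_simp
    have : rho A G Λ 0 ≤ ((∑ i, m i : ℝ) : EReal) := by
      apply sInf_le
      exact ⟨m, hmem, rfl⟩
    refine this.trans ?_
    rw [hsum]
    exact_mod_cast (by linarith : γ + (N:ℝ)/n ≤ c)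
  · -- γ ≤ rho
    apply le_sInf
    rintro x ⟨m, ⟨g, hg, hA⟩, rfl⟩
    by_contra h
    push_neg at h
    have hlt : ∑ i, m i < γ := by exact_mod_cast h
    exact hnoarb m hlt ⟨g, hg, by simpa using hA⟩
end

section
/- Assume no regulatory arbitrage at level γ and Assumption (A) as above. Then Φ(X) := ρ(−X) is real valued on B_Z: for every Borel measurable X : Ω → ℝ^N with X/Z componentwise bounded, −∞ < Φ(X) < +∞. -/
open scoped BigOperators

lemma exists_const_accept {Ω : Type*} {N : ℕ}
    (Z : Ω → ℝ) (hZ1 : ∀ ω, 1 ≤ Z ω)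
    (A : Set (Ω → ℝ)) (G : Set (Ω → Fin N → ℝ))
    (hAmono : ∀ x y : Ω → ℝ, y ∈ A → (∀ ω, y ω ≤ x ω) → x ∈ A)
    (Λ : (Fin N → ℝ) → ℝ) (hΛmono : Monotone Λ) (γ : ℝ)
    (hassA : ∀ n : ℕ, 0 < n → ∃ z : ℝ, 0 ≤ z ∧ ∃ g ∈ G,
      (fun ω => Λ (fun i => γ / N + 1 / n - n * max (Z ω - z) 0 + g ω i)) ∈ A)
    (X : Ω → Fin N → ℝ) (M : ℝ) (hM0 : 0 ≤ M)
    (hMX : ∀ ω i, |X ω i| ≤ M * Z ω) :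
    ∃ m : ℝ, ∃ g ∈ G, (fun ω => Λ (fun i => m + X ω i + g ω i)) ∈ A := by
  set n : ℕ := ⌈M⌉₊ + 1 with hn
  have hnpos : 0 < n := Nat.succ_pos _
  have hnM : M ≤ (n : ℝ) := le_trans (Nat.le_ceil M) (by exact_mod_cast Nat.le_succ _)
  obtain ⟨z, hz0, g, hgG, hA⟩ := hassA n hnpos
  refine ⟨γ / N + 1 / n + M * z, g, hgG, hAmono _ _ hA ?_⟩
  intro ω
  apply hΛmono
  intro i
  have hX : -(M * Z ω) ≤ X ω i := neg_le_of_abs_le (hMX ω i)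
  have hZ : (1 : ℝ) ≤ Z ω := hZ1 ω
  rcases le_total (Z ω) z with h | h
  · have : max (Z ω - z) 0 = 0 := max_eq_right (by linarith)
    rw [this]; nlinarith
  · have : max (Z ω - z) 0 = Z ω - z := max_eq_left (by linarith)
    rw [this]; nlinarith

/-- under no regulatory arbitrage at level γ and Assumption (A),
Φ(X) := ρ(−X) is real valued on B_Z. -/
theorem stmt_15 {Ω : Type*} [MeasurableSpace Ω] [MetricSpace Ω] [BorelSpace Ω]
    [Nonempty Ω] {N : ℕ} (hN : 0 < N)
    (Z : Ω → ℝ) (hZc : Continuous Z) (hZ1 : ∀ ω, 1 ≤ Z ω)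
    (hZcomp : ∀ z : ℝ, IsCompact {ω | Z ω ≤ z})
    (A : Set (Ω → ℝ)) (G : Set (Ω → Fin N → ℝ))
    (hAmono : ∀ x y : Ω → ℝ, y ∈ A → (∀ ω, y ω ≤ x ω) → x ∈ A)
    (h0A : (0 : Ω → ℝ) ∈ A) (h0G : (0 : Ω → Fin N → ℝ) ∈ G)
    (Λ : (Fin N → ℝ) → ℝ) (hΛmono : Monotone Λ)
    (hΛconc : ConcaveOn ℝ Set.univ Λ) (hΛ0 : Λ 0 = 0)
    (hCconv : Convex ℝ {X : Ω → Fin N → ℝ | ∃ g ∈ G, (fun ω => Λ (X ω + g ω)) ∈ A})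
    (γ : ℝ) (hγ : γ ≤ 0)
    (hnoarb : ∀ m : Fin N → ℝ, (∑ i, m i) < γ →
      ¬ ∃ g ∈ G, (fun ω => Λ (fun i => m i + g ω i)) ∈ A)
    (hassA : ∀ n : ℕ, 0 < n → ∃ z : ℝ, 0 ≤ z ∧ ∃ g ∈ G,
      (fun ω => Λ (fun i => γ / N + 1 / n - n * max (Z ω - z) 0 + g ω i)) ∈ A)
    (BZ : Set (Ω → Fin N → ℝ))
    (hBZ : BZ = {X : Ω → Fin N → ℝ | Measurable X ∧ ∀ i, ∃ M : ℝ, ∀ ω, |X ω i| ≤ M * Z ω}) :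
    ∀ X ∈ BZ, rho A G Λ (-X) ≠ ⊤ ∧ rho A G Λ (-X) ≠ ⊥ := by
  intro X hX
  rw [hBZ] at hX
  obtain ⟨hmeas, hbd⟩ := hX
  choose Mf hMf using hbd
  set M : ℝ := ∑ j, |Mf j| with hMdef
  have hM0 : 0 ≤ M := Finset.sum_nonneg fun j _ => abs_nonneg _
  have hZpos : ∀ ω, (0 : ℝ) ≤ Z ω := fun ω => le_trans zero_le_one (hZ1 ω)
  have hMX : ∀ ω i, |X ω i| ≤ M * Z ω := by
    intro ω i
    refine le_trans (hMf i ω) (mul_le_mul_of_nonneg_right ?_ (hZpos ω))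
    exact le_trans (le_abs_self _) (Finset.single_le_sum (fun j _ => abs_nonneg (Mf j)) (Finset.mem_univ i))
  have hMXneg : ∀ ω i, |(-X) ω i| ≤ M * Z ω := by
    intro ω i; simpa [abs_neg] using hMX ω i
  -- constant for -X : gives finiteness from above
  obtain ⟨m, g, hgG, hAm⟩ := exists_const_accept Z hZ1 A G hAmono Λ hΛmono γ hassA (-X) M hM0 hMXneg
  -- constant for X : gives finiteness from below via convexity + no arbitrage
  obtain ⟨m', g', hg'G, hAm'⟩ := exists_const_accept Z hZ1 A G hAmono Λ hΛmono γ hassA X M hM0 hMX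
  constructor
  · -- rho (-X) ≤ N * m < ⊤
    have hmem : ((∑ i, (fun _ : Fin N => m) i : ℝ) : EReal) ∈
        ((fun m : Fin N → ℝ => ((∑ i, m i : ℝ) : EReal)) ''
          {m | ∃ g ∈ G, (fun ω => Λ (fun i => m i + (-X) ω i + g ω i)) ∈ A}) :=
      ⟨fun _ => m, ⟨g, hgG, hAm⟩, rfl⟩
    have hle : rho A G Λ (-X) ≤ ((∑ i : Fin N, m : ℝ) : EReal) := sInf_le hmem
    exact ne_top_of_le_ne_top (EReal.coe_ne_top _) hle
  · -- every element of the image is ≥ 2γ - N*m'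
    set c : ℝ := 2 * γ - N * m' with hc
    have hlb : (c : EReal) ≤ rho A G Λ (-X) := by
      apply le_sInf
      rintro r ⟨mv, ⟨g₂, hg₂G, hA₂⟩, rfl⟩
      rw [EReal.coe_le_coe_iff]
      by_contra hlt
      push_neg at hlt
      -- mv - X is acceptable, m' + X is acceptable, use convexity of C
      set C := {Y : Ω → Fin N → ℝ | ∃ g ∈ G, (fun ω => Λ (Y ω + g ω)) ∈ A} with hC
      have hY1 : (fun ω i => mv i + (-X) ω i) ∈ C := ⟨g₂, hg₂G, hA₂⟩
      have hY2 : (fun ω i => m' + X ω i) ∈ C := ⟨g', hg'G, hAm'⟩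
      have hmid := hCconv hY1 hY2 (le_of_lt one_half_pos) (le_of_lt one_half_pos) (by norm_num)
      obtain ⟨g₃, hg₃G, hA₃⟩ := hmid
      set p : Fin N → ℝ := fun i => (mv i + m') / 2 with hp
      have hkey : (fun ω => Λ (fun i => p i + g₃ ω i)) ∈ A := by
        have heq : (fun ω => Λ ((((1:ℝ)/2) • (fun ω i => mv i + (-X) ω i) +
            ((1:ℝ)/2) • (fun ω i => m' + X ω i)) ω + g₃ ω)) =
            (fun ω => Λ (fun i => p i + g₃ ω i)) := by
          funext ω
          congr 1
          funext i
          simp only [Pi.add_apply, Pi.smul_apply, smul_eq_mul, Pi.neg_apply, hp]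
          ring
        rw [← heq]; exact hA₃
      have hpsum : ∑ i, p i < γ := by
        have : ∑ i, p i = ((∑ i, mv i) + N * m') / 2 := by
          simp only [hp, ← Finset.sum_div, Finset.sum_add_distrib, Finset.sum_const,
            Finset.card_univ, Fintype.card_fin, nsmul_eq_mul]
        rw [this]; rw [hc] at hlt; linarith
      exact hnoarb p hpsum ⟨g₃, hg₃G, hkey⟩
    intro hbot
    rw [hbot] at hlb
    exact (EReal.bot_lt_coe c).not_ge hlb
end
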